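/- arXiv:2012.12772 — 5 statements merged into one kernel-verified Lean document; each statement's English description precedes it below -/
import Mathlib

section
/- A symmetric matrix D is a Euclidean distance matrix (i.e., there exist points p_1,...,p_n in some Euclidean space with D_{ij} = ||p_i - p_j||^2) if and only if D has zero diagonal and -JDJ is positive semidefinite, where J = I - (1/n)𝟙𝟙^T is the centering matrix. -/
open Matrix

/-- The centering matrix `J = I - (1/n) 𝟙𝟙ᵀ`. -/
noncomputable def centerJ (n : ℕ) : Matrix (Fin n) (Fin n) ℝ :=
  1 - ((n : ℝ))⁻¹ • Matrix.of (fun _ _ => (1 : ℝ))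

lemma centerJ_apply (n : ℕ) (i a : Fin n) :
    centerJ n i a = (if i = a then (1 : ℝ) else 0) - (n : ℝ)⁻¹ := by
  simp [centerJ, Matrix.sub_apply, Matrix.one_apply]

lemma centerJ_transpose (n : ℕ) : (centerJ n)ᵀ = centerJ n := by
  ext i j
  simp only [Matrix.transpose_apply, centerJ_apply]
  by_cases h : i = j <;> simp [h, eq_comm]

/-- entrywise formula for `J * D * J`. -/
lemma JDJ_apply (n : ℕ) (D : Matrix (Fin n) (Fin n) ℝ) (i j : Fin n) :
    (centerJ n * D * centerJ n) i j
      = D i j - (n : ℝ)⁻¹ * (∑ a, D a j) - (n : ℝ)⁻¹ * (∑ b, D i b)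
        + (n : ℝ)⁻¹ * (n : ℝ)⁻¹ * (∑ b, ∑ a, D a b) := by
  have h1 : ∀ b, (centerJ n * D) i b = D i b - (n : ℝ)⁻¹ * ∑ a, D a b := by
    intro b
    rw [Matrix.mul_apply]
    simp only [centerJ_apply, sub_mul, ite_mul, one_mul, zero_mul]
    rw [Finset.sum_sub_distrib, Finset.sum_ite_eq (Finset.univ) i (fun a => D a b)]
    simp [Finset.mul_sum]
  rw [Matrix.mul_apply]
  simp only [h1, centerJ_apply, mul_sub, mul_ite, mul_one, mul_zero, sub_mul]
  rw [Finset.sum_sub_distrib]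
  have h2 : ∀ f : Fin n → ℝ, (∑ b, if b = j then f b else 0) = f j := by
    intro f; simp
  rw [show (∑ b, ((if b = j then D i b - (n:ℝ)⁻¹ * ∑ a, D a b else 0)))
      = D i j - (n:ℝ)⁻¹ * ∑ a, D a j from h2 (fun b => D i b - (n:ℝ)⁻¹ * ∑ a, D a b)]
  rw [Finset.sum_sub_distrib, ← Finset.sum_mul, ← Finset.sum_mul, ← Finset.mul_sum]
  ring

lemma normsq_euclidean {k : ℕ} (x : EuclideanSpace ℝ (Fin k)) :
    ‖x‖ ^ 2 = ∑ l, (x l) ^ 2 := by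
  rw [EuclideanSpace.norm_eq, Real.sq_sqrt]
  · simp [sq_abs]
  · positivity

lemma psd_smul {n : ℕ} {M : Matrix (Fin n) (Fin n) ℝ} (hM : M.PosSemidef)
    {c : ℝ} (hc : 0 ≤ c) : (c • M).PosSemidef := by
  refine Matrix.posSemidef_iff_dotProduct_mulVec.mpr ⟨?_, fun x => ?_⟩
  · have h : Mᴴ = M := hM.1
    rw [Matrix.IsHermitian, Matrix.conjTranspose_smul, h]
    simp
  · have := hM.dotProduct_mulVec_nonneg x
    rw [Matrix.smul_mulVec, dotProduct_smul]
    exact mul_nonneg hc this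

/-- A symmetric matrix is a Euclidean distance matrix iff it has zero diagonal
and `-JDJ` is positive semidefinite. -/
theorem edm_characterization (n : ℕ) (hn : 1 ≤ n)
    (D : Matrix (Fin n) (Fin n) ℝ) (hD : D.IsSymm) :
    (∃ (k : ℕ) (p : Fin n → EuclideanSpace ℝ (Fin k)),
        ∀ i j, D i j = ‖p i - p j‖ ^ 2) ↔
      ((∀ i, D i i = 0) ∧ (-(centerJ n * D * centerJ n)).PosSemidef) := by
  have hn0 : (n : ℝ) ≠ 0 := by positivity
  constructor
  · rintro ⟨k, p, hp⟩
    constructor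
    · intro i; simp [hp i i]
    · -- decompose D
      set E : Matrix (Fin n) (Fin n) ℝ := Matrix.of (fun _ _ => (1 : ℝ)) with hE
      have hEJ : E * centerJ n = 0 := by
        ext i j
        rw [Matrix.mul_apply]
        simp only [hE, Matrix.of_apply, one_mul, centerJ_apply, Matrix.zero_apply]
        rw [Finset.sum_sub_distrib]
        simp [Finset.sum_ite_eq', Finset.card_univ, mul_comm, hn0]
      have hJE : centerJ n * E = 0 := by
        have := congrArg Matrix.transpose hEJ
        rwa [Matrix.transpose_mul, centerJ_transpose,
          show Eᵀ = E from by ext i j; rfl, Matrix.transpose_zero] at this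
      set g : Fin n → ℝ := fun i => ‖p i‖ ^ 2 with hg
      set P : Matrix (Fin n) (Fin k) ℝ := Matrix.of (fun i l => p i l) with hP
      have hDdec : D = Matrix.diagonal g * E + E * Matrix.diagonal g
          - (2 : ℝ) • (P * Pᵀ) := by
        ext i j
        simp only [Matrix.sub_apply, Matrix.add_apply, Matrix.smul_apply,
          Matrix.diagonal_mul, Matrix.mul_diagonal, hE, Matrix.of_apply, one_mul,
          mul_one, smul_eq_mul]
        have hinner : (P * Pᵀ) i j = (inner ℝ (p i) (p j) : ℝ) := by
          rw [Matrix.mul_apply, PiLp.inner_apply]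
          simp [hP, RCLike.inner_apply, mul_comm]
        rw [hp i j, hinner, norm_sub_sq_real]
        simp only [hg]; ring
      have key : -(centerJ n * D * centerJ n)
          = (2 : ℝ) • ((centerJ n * P) * (centerJ n * P)ᵀ) := by
        rw [hDdec]
        rw [Matrix.mul_sub, Matrix.sub_mul, Matrix.mul_add, Matrix.add_mul]
        rw [show centerJ n * (Matrix.diagonal g * E) * centerJ n
            = centerJ n * Matrix.diagonal g * (E * centerJ n) from by
              simp only [Matrix.mul_assoc]]
        rw [show centerJ n * (E * Matrix.diagonal g) * centerJ n
            = (centerJ n * E) * (Matrix.diagonal g * centerJ n) from by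
              simp only [Matrix.mul_assoc]]
        rw [hEJ, hJE, Matrix.mul_zero, Matrix.zero_mul]
        rw [Matrix.mul_smul, Matrix.smul_mul]
        rw [show centerJ n * (P * Pᵀ) * centerJ n
            = (centerJ n * P) * (Pᵀ * centerJ n) from by
              simp only [Matrix.mul_assoc]]
        rw [Matrix.transpose_mul, centerJ_transpose]
        abel
      rw [key]
      apply psd_smul _ (by norm_num)
      have h := Matrix.posSemidef_self_mul_conjTranspose (centerJ n * P)
      rwa [Matrix.conjTranspose_eq_transpose_of_trivial] at h
  · rintro ⟨hdiag, hpsd⟩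
    have hB : ((2 : ℝ)⁻¹ • -(centerJ n * D * centerJ n)).PosSemidef :=
      psd_smul hpsd (by norm_num)
    open scoped MatrixOrder in
    obtain ⟨M, hM⟩ := CStarAlgebra.nonneg_iff_eq_star_mul_self.mp hB.nonneg
    set B := (2 : ℝ)⁻¹ • -(centerJ n * D * centerJ n) with hBdef
    refine ⟨n, fun i => (EuclideanSpace.equiv (Fin n) ℝ).symm (fun l => M l i), ?_⟩
    intro i j
    have happ : ∀ a b : Fin n, B a b = ∑ l, M l a * M l b := by
      intro a b
      rw [hM, Matrix.mul_apply]
      simp [Matrix.conjTranspose_apply]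
    have hnorm : ‖(EuclideanSpace.equiv (Fin n) ℝ).symm (fun l => M l i)
        - (EuclideanSpace.equiv (Fin n) ℝ).symm (fun l => M l j)‖ ^ 2
        = B i i + B j j - 2 * B i j := by
      rw [normsq_euclidean]
      simp only [happ]
      rw [← Finset.sum_add_distrib, Finset.mul_sum, ← Finset.sum_sub_distrib]
      apply Finset.sum_congr rfl
      intro l _
      have hl : (((EuclideanSpace.equiv (Fin n) ℝ).symm fun l => M l i)
          - (EuclideanSpace.equiv (Fin n) ℝ).symm fun l => M l j) l
          = M l i - M l j := rfl
      rw [hl]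
      ring
    rw [hnorm]
    -- now compute B entries via JDJ_apply
    have hBapp : ∀ a b : Fin n, B a b
        = (2:ℝ)⁻¹ * -(D a b - (n : ℝ)⁻¹ * (∑ x, D x b) - (n : ℝ)⁻¹ * (∑ x, D a x)
            + (n : ℝ)⁻¹ * (n : ℝ)⁻¹ * (∑ y, ∑ x, D x y)) := by
      intro a b
      rw [hBdef]
      simp only [Matrix.smul_apply, Matrix.neg_apply, smul_eq_mul]
      rw [JDJ_apply]
    have hsymm : ∀ a : Fin n, (∑ x, D x a) = ∑ x, D a x := by
      intro a
      apply Finset.sum_congr rfl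
      intro x _
      exact hD.apply a x
    rw [hBapp, hBapp, hBapp, hsymm i, hsymm j, hdiag i, hdiag j]
    ring
end

section
/- Let P̄_1 ∈ ℝ^{n×r} have orthonormal columns and define P_{T⊥}(A) := P̄_1P̄_1^T A + A P̄_1P̄_1^T - P̄_1P̄_1^T A P̄_1P̄_1^T. Then for every A ∈ S^n, the nuclear norm of P_{T⊥}(A) is at most √(2r) times the Frobenius norm of A: ||P_{T⊥}(A)||_* ≤ √(2r)||A||_F. -/
open Matrix

/-- The Frobenius norm of a real square matrix. -/
noncomputable def frobNorm {n : ℕ} (A : Matrix (Fin n) (Fin n) ℝ) : ℝ :=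
  Real.sqrt (∑ i, ∑ j, (A i j) ^ 2)

/-- The nuclear norm (sum of singular values) of a real square matrix. -/
noncomputable def nuclearNorm {n : ℕ} (A : Matrix (Fin n) (Fin n) ℝ) : ℝ :=
  ∑ i, Real.sqrt ((Matrix.isHermitian_conjTranspose_mul_self A).eigenvalues i)

lemma myRankAddLe {n : ℕ} (M N : Matrix (Fin n) (Fin n) ℝ) :
    (M + N).rank ≤ M.rank + N.rank := by
  rw [Matrix.rank, Matrix.rank, Matrix.rank, Matrix.mulVecLin_add]
  have h : LinearMap.range (M.mulVecLin + N.mulVecLin) ≤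
      LinearMap.range M.mulVecLin ⊔ LinearMap.range N.mulVecLin := by
    rintro x ⟨y, rfl⟩
    exact Submodule.add_mem_sup (LinearMap.mem_range_self _ y) (LinearMap.mem_range_self _ y)
  exact (Submodule.finrank_mono h).trans
    (Submodule.finrank_add_le_finrank_add_finrank _ _)

lemma myTraceEqSumEigs {m : ℕ} (B : Matrix (Fin m) (Fin m) ℝ) (hB : B.IsHermitian) :
    B.trace = ∑ i, hB.eigenvalues i := by
  conv_lhs => rw [hB.spectral_theorem, Unitary.conjStarAlgAut_apply]
  rw [Matrix.trace_mul_comm, ← Matrix.mul_assoc]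
  rw [show (star (hB.eigenvectorUnitary : Matrix (Fin m) (Fin m) ℝ)) *
      (hB.eigenvectorUnitary : Matrix (Fin m) (Fin m) ℝ) = 1 from
    Unitary.coe_star_mul_self _, one_mul, Matrix.trace_diagonal]
  simp

lemma traceTT {m : ℕ} (X : Matrix (Fin m) (Fin m) ℝ) :
    (Xᵀ * X).trace = ∑ i, ∑ j, (X i j) ^ 2 := by
  rw [Finset.sum_comm]
  simp [Matrix.trace, Matrix.mul_apply, Matrix.diag, sq]

/-- `‖P_{T⊥}(A)‖_* ≤ √(2r) ‖A‖_F` for `P_{T⊥}(A) = QA + AQ - QAQ`, `Q = P₁P₁ᵀ`. -/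
theorem nuclearNorm_proj_Tperp_le (n r : ℕ) (hr : 1 ≤ r) (hrn : r ≤ n)
    (P₁ : Matrix (Fin n) (Fin r) ℝ) (hP : P₁ᵀ * P₁ = 1)
    (A : Matrix (Fin n) (Fin n) ℝ) (hA : A.IsSymm) :
    nuclearNorm (P₁ * P₁ᵀ * A + A * (P₁ * P₁ᵀ) - P₁ * P₁ᵀ * A * (P₁ * P₁ᵀ)) ≤
      Real.sqrt (2 * r) * frobNorm A := by
  set Q : Matrix (Fin n) (Fin n) ℝ := P₁ * P₁ᵀ with hQdef
  set M : Matrix (Fin n) (Fin n) ℝ := Q * A + A * Q - Q * A * Q with hMdef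
  set B : Matrix (Fin n) (Fin n) ℝ := (1 - Q) * A * (1 - Q) with hBdef
  have hQ2 : Q * Q = Q := by
    rw [hQdef, Matrix.mul_assoc, ← Matrix.mul_assoc P₁ᵀ P₁ P₁ᵀ, hP, Matrix.one_mul]
  have hQ0 : Q * (1 - Q) = 0 := by rw [Matrix.mul_sub, Matrix.mul_one, hQ2, sub_self]
  have hQ0' : (1 - Q) * Q = 0 := by rw [Matrix.sub_mul, Matrix.one_mul, hQ2, sub_self]
  have hQsymm : Qᵀ = Q := by rw [hQdef, Matrix.transpose_mul, Matrix.transpose_transpose]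
  have hAsymm : Aᵀ = A := hA
  have hMsymm : Mᵀ = M := by
    rw [hMdef]
    simp only [Matrix.transpose_sub, Matrix.transpose_add, Matrix.transpose_mul,
      hQsymm, hAsymm, ← Matrix.mul_assoc]
    abel
  -- trace (M * B) = 0
  have h1 : M * (1 - Q) = Q * (A * (1 - Q)) := by
    rw [hMdef, Matrix.sub_mul, Matrix.add_mul, Matrix.mul_assoc A Q (1 - Q), hQ0,
      Matrix.mul_zero, Matrix.mul_assoc (Q * A) Q (1 - Q), hQ0, Matrix.mul_zero,
      sub_zero, add_zero, Matrix.mul_assoc]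
  have hMB : M * B = Q * ((A * (1 - Q)) * (A * (1 - Q))) := by
    rw [hBdef, show (1 - Q) * A * (1 - Q) = (1 - Q) * (A * (1 - Q)) from Matrix.mul_assoc _ _ _,
      ← Matrix.mul_assoc M (1 - Q) (A * (1 - Q)), h1, Matrix.mul_assoc]
  have htrMB : (M * B).trace = 0 := by
    rw [hMB, Matrix.trace_mul_comm, Matrix.mul_assoc, Matrix.mul_assoc A (1 - Q) Q, hQ0',
      Matrix.mul_zero, Matrix.mul_zero, Matrix.trace_zero]
  -- A = M + B
  have hAMB : A = M + B := by rw [hMdef, hBdef]; noncomm_ring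
  -- trace (Mᵀ*M) ≤ trace (Aᵀ*A)
  have htr : (Mᵀ * M).trace ≤ (Aᵀ * A).trace := by
    have expand : Aᵀ * A = Mᵀ * M + (Mᵀ * B + (Bᵀ * M + Bᵀ * B)) := by
      rw [hAMB, Matrix.transpose_add, Matrix.add_mul, Matrix.mul_add, Matrix.mul_add]; abel
    have h2 : (Bᵀ * M).trace = (Mᵀ * B).trace := by
      rw [← Matrix.trace_transpose (Bᵀ * M), Matrix.transpose_mul, Matrix.transpose_transpose]
    have h3 : (Mᵀ * B).trace = 0 := by rw [hMsymm, htrMB]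
    have h4 : 0 ≤ (Bᵀ * B).trace := by
      rw [traceTT]
      positivity
    rw [expand, Matrix.trace_add, Matrix.trace_add, Matrix.trace_add, h2, h3]
    linarith
  -- rank M ≤ 2 * r
  have hrank : M.rank ≤ 2 * r := by
    have e1 : P₁ * (P₁ᵀ * A) = Q * A := (Matrix.mul_assoc _ _ _).symm
    have e2 : ((1 - Q) * A * P₁) * P₁ᵀ = A * Q - Q * A * Q := by
      rw [Matrix.mul_assoc ((1 - Q) * A) P₁ P₁ᵀ, ← hQdef, Matrix.sub_mul, Matrix.one_mul,
        Matrix.sub_mul]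
    have hsplit : M = P₁ * (P₁ᵀ * A) + ((1 - Q) * A * P₁) * P₁ᵀ := by
      rw [e1, e2, hMdef]; abel
    calc M.rank ≤ (P₁ * (P₁ᵀ * A)).rank + (((1 - Q) * A * P₁) * P₁ᵀ).rank := by
          rw [hsplit]; exact myRankAddLe _ _
      _ ≤ r + r := by
          apply Nat.add_le_add
          · exact (Matrix.rank_mul_le_left _ _).trans
              ((Matrix.rank_le_card_width P₁).trans (by simp))
          · exact (Matrix.rank_mul_le_right _ _).trans
              ((Matrix.rank_le_card_height P₁ᵀ).trans (by simp))
      _ = 2 * r := (two_mul r).symm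
  -- Cauchy–Schwarz on singular values
  classical
  have hN := Matrix.isHermitian_conjTranspose_mul_self M
  have hpsd : (Mᴴ * M).PosSemidef := Matrix.posSemidef_conjTranspose_mul_self M
  have hnn : ∀ i, 0 ≤ hN.eigenvalues i := fun i => hpsd.eigenvalues_nonneg i
  have hsum : ∑ i, hN.eigenvalues i = (Mᵀ * M).trace := by
    rw [← Matrix.conjTranspose_eq_transpose_of_trivial]
    exact (myTraceEqSumEigs _ hN).symm
  set s : Finset (Fin n) := Finset.univ.filter (fun i => hN.eigenvalues i ≠ 0) with hs
  have hcard : (s.card : ℝ) ≤ 2 * r := by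
    have h1 : Fintype.card {i // hN.eigenvalues i ≠ 0} ≤ 2 * r := by
      rw [← hN.rank_eq_card_non_zero_eigs, Matrix.conjTranspose_eq_transpose_of_trivial,
        Matrix.rank_transpose_mul_self]
      exact hrank
    rw [Fintype.card_subtype] at h1
    exact_mod_cast h1
  have hstep : nuclearNorm M = ∑ i ∈ s, Real.sqrt (hN.eigenvalues i) := by
    simp only [nuclearNorm, hs]
    symm
    apply Finset.sum_filter_of_ne
    intro x _ hx h
    exact hx (by rw [h, Real.sqrt_zero])
  have cs : (∑ i ∈ s, Real.sqrt (hN.eigenvalues i)) ^ 2 ≤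
      (s.card : ℝ) * ∑ i ∈ s, hN.eigenvalues i := by
    have h := sq_sum_le_card_mul_sum_sq (s := s)
      (f := fun i => Real.sqrt (hN.eigenvalues i))
    have h2 : ∑ i ∈ s, Real.sqrt (hN.eigenvalues i) ^ 2 = ∑ i ∈ s, hN.eigenvalues i :=
      Finset.sum_congr rfl fun i _ => Real.sq_sqrt (hnn i)
    rw [h2] at h
    exact h
  have hsumle : ∑ i ∈ s, hN.eigenvalues i ≤ ∑ i, ∑ j, (A i j) ^ 2 := by
    calc ∑ i ∈ s, hN.eigenvalues i ≤ ∑ i, hN.eigenvalues i :=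
          Finset.sum_le_sum_of_subset_of_nonneg (Finset.filter_subset _ _)
            (fun i _ _ => hnn i)
      _ = (Mᵀ * M).trace := hsum
      _ ≤ (Aᵀ * A).trace := htr
      _ = ∑ i, ∑ j, (A i j) ^ 2 := traceTT A
  have hsum0 : 0 ≤ ∑ i ∈ s, hN.eigenvalues i := Finset.sum_nonneg fun i _ => hnn i
  have hnuc0 : 0 ≤ nuclearNorm M := by
    simp only [nuclearNorm]
    exact Finset.sum_nonneg fun i _ => Real.sqrt_nonneg _
  have hfin : nuclearNorm M ^ 2 ≤ (2 * r) * ∑ i, ∑ j, (A i j) ^ 2 := by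
    rw [hstep]
    calc (∑ i ∈ s, Real.sqrt (hN.eigenvalues i)) ^ 2
        ≤ (s.card : ℝ) * ∑ i ∈ s, hN.eigenvalues i := cs
      _ ≤ (2 * r) * ∑ i, ∑ j, (A i j) ^ 2 :=
          mul_le_mul hcard hsumle hsum0 (by positivity)
  calc nuclearNorm M = Real.sqrt (nuclearNorm M ^ 2) := (Real.sqrt_sq hnuc0).symm
    _ ≤ Real.sqrt ((2 * r) * ∑ i, ∑ j, (A i j) ^ 2) := Real.sqrt_le_sqrt hfin
    _ = Real.sqrt (2 * r) * frobNorm A := by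
        rw [Real.sqrt_mul (by positivity)]; simp only [frobNorm]
end

section
/- For any symmetric matrix A with zero diagonal, ||A||_* ≤ √2 ||A - JAJ||_F + ||JAJ||_*, where J is the centering matrix, ||·||_* the nuclear norm, and ||·||_F the Frobenius norm. -/
open Matrix

section Aux

open Polynomial

variable {n : ℕ}


lemma charpoly_conj (V D W : Matrix (Fin n) (Fin n) ℝ)
    (hVW : V * W = 1) : (V * D * W).charpoly = D.charpoly := by
  have hmm : (C : ℝ →+* ℝ[X]).mapMatrix V * (C : ℝ →+* ℝ[X]).mapMatrix W = 1 := by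
    rw [← _root_.map_mul, hVW, _root_.map_one]
  have key : charmatrix (V * D * W)
      = ((C : ℝ →+* ℝ[X]).mapMatrix V) * charmatrix D * ((C : ℝ →+* ℝ[X]).mapMatrix W) := by
    rw [charmatrix, charmatrix, Matrix.mul_sub, Matrix.sub_mul]
    congr 1
    · rw [mul_assoc, (scalar_commute (X : ℝ[X]) (fun r => (Commute.all _ _)) _),
        ← mul_assoc, hmm, one_mul]
    · rw [← _root_.map_mul, ← _root_.map_mul]
  rw [Matrix.charpoly, Matrix.charpoly, key, det_mul, det_mul, mul_comm, ← mul_assoc,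
    mul_comm ((C.mapMatrix W).det) _, ← det_mul, hmm, det_one, one_mul]

lemma spectral_real {S : Matrix (Fin n) (Fin n) ℝ} (hS : S.IsHermitian) :
    S = (hS.eigenvectorUnitary : Matrix (Fin n) (Fin n) ℝ) * diagonal hS.eigenvalues
      * star (hS.eigenvectorUnitary : Matrix (Fin n) (Fin n) ℝ) := by
  have := hS.spectral_theorem
  rwa [RCLike.ofReal_real_eq_id, Function.id_comp] at this

lemma charpoly_diag (d : Fin n → ℝ) :
    (diagonal d).charpoly = ∏ i, (X - C (d i)) := by
  rw [charpoly_of_upperTriangular _ (blockTriangular_diagonal d)]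
  simp

lemma sum_abs_eigen (S : Matrix (Fin n) (Fin n) ℝ) (hS : S.IsHermitian) :
    nuclearNorm S = ∑ i, |hS.eigenvalues i| := by
  set V := (hS.eigenvectorUnitary : Matrix (Fin n) (Fin n) ℝ) with hVdef
  have hV1 : star V * V = 1 := Matrix.mem_unitaryGroup_iff'.mp hS.eigenvectorUnitary.2
  have hV2 : V * star V = 1 := Matrix.mem_unitaryGroup_iff.mp hS.eigenvectorUnitary.2
  set lam := hS.eigenvalues
  have hdd : diagonal (fun i => lam i ^ 2) = diagonal lam * diagonal lam := by
    rw [diagonal_mul_diagonal]; simp [sq]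
  have hfact : Sᴴ * S = V * diagonal (fun i => lam i ^ 2) * star V := by
    rw [hS.eq, hdd]
    conv_lhs => rw [spectral_real hS, ← hVdef]
    calc (V * diagonal lam * star V) * (V * diagonal lam * star V)
        = V * (diagonal lam * ((star V * V) * (diagonal lam * star V))) := by
          simp only [mul_assoc]
      _ = V * (diagonal lam * diagonal lam) * star V := by
          rw [hV1, one_mul]; simp only [mul_assoc]
  set hB' := Matrix.isHermitian_conjTranspose_mul_self S with hB'def
  set mu := hB'.eigenvalues
  have h1 : (Sᴴ * S).charpoly = (diagonal (fun i => lam i ^ 2)).charpoly := by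
    rw [hfact]
    exact charpoly_conj _ _ _ hV2
  have h2 : (Sᴴ * S).charpoly = (diagonal mu).charpoly := by
    conv_lhs => rw [spectral_real hB']
    exact charpoly_conj _ _ _
      (Matrix.mem_unitaryGroup_iff.mp hB'.eigenvectorUnitary.2)
  have hmult : Finset.univ.val.map mu = Finset.univ.val.map (fun i => lam i ^ 2) := by
    have h3 := congrArg Polynomial.roots (h2.symm.trans h1)
    rwa [charpoly_diag, charpoly_diag, Finset.prod_eq_multiset_prod, Finset.prod_eq_multiset_prod,
      show (fun i => X - C (mu i)) = (fun a => X - C a) ∘ mu from rfl,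
      show (fun i => X - C (lam i ^ 2)) = (fun a => X - C a) ∘ (fun i => lam i ^ 2) from rfl,
      ← Multiset.map_map, ← Multiset.map_map,
      roots_multiset_prod_X_sub_C, roots_multiset_prod_X_sub_C] at h3
  have l1 : ∑ i, Real.sqrt (mu i) = ((Finset.univ.val.map mu).map Real.sqrt).sum := by
    rw [Multiset.map_map]; rfl
  have l2 : ∑ i, |lam i|
      = ((Finset.univ.val.map (fun i => lam i ^ 2)).map Real.sqrt).sum := by
    rw [Multiset.map_map]
    simp only [Function.comp, Real.sqrt_sq_eq_abs]
    rfl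
  show ∑ i, Real.sqrt (mu i) = ∑ i, |lam i|
  rw [l1, l2, hmult]

lemma conj_mul_conj (V D E : Matrix (Fin n) (Fin n) ℝ) (hV1 : star V * V = 1) :
    (V * D * star V) * (V * E * star V) = V * (D * E) * star V := by
  calc (V * D * star V) * (V * E * star V)
      = V * (D * ((star V * V) * (E * star V))) := by simp only [mul_assoc]
    _ = V * (D * E) * star V := by rw [hV1, one_mul]; simp only [mul_assoc]

lemma trace_conj (V D : Matrix (Fin n) (Fin n) ℝ) (hV1 : star V * V = 1) :
    Matrix.trace (V * D * star V) = Matrix.trace D := by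
  rw [Matrix.trace_mul_cycle, hV1, one_mul]

lemma trace_mul_le (T Xm : Matrix (Fin n) (Fin n) ℝ) (hT : T.IsHermitian)
    (hX : ∀ v : Fin n → ℝ, |v ⬝ᵥ (Xm *ᵥ v)| ≤ v ⬝ᵥ v) :
    Matrix.trace (Xm * T) ≤ ∑ i, |hT.eigenvalues i| := by
  set V := (hT.eigenvectorUnitary : Matrix (Fin n) (Fin n) ℝ) with hVdef
  have hV1 : star V * V = 1 := Matrix.mem_unitaryGroup_iff'.mp hT.eigenvectorUnitary.2
  set lam := hT.eigenvalues
  have key : Matrix.trace (Xm * T) = ∑ i, ((star V * Xm * V) i i) * lam i := by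
    conv_lhs => rw [spectral_real hT, ← hVdef]
    rw [show Xm * (V * diagonal lam * star V) = (Xm * V) * diagonal lam * star V by
      simp only [mul_assoc], Matrix.trace_mul_cycle, Matrix.trace]
    simp only [Matrix.diag_apply, Matrix.mul_diagonal, ← mul_assoc]
  rw [key]
  have hdot : ∀ i, (star V * Xm * V) i i = (fun k => V k i) ⬝ᵥ (Xm *ᵥ (fun k => V k i)) := by
    intro i
    simp only [Matrix.mul_apply, Matrix.star_apply, star_trivial, dotProduct,
      Matrix.mulVec, Finset.sum_mul, Finset.mul_sum]
    rw [Finset.sum_comm]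
    exact Finset.sum_congr rfl fun k _ => Finset.sum_congr rfl fun j _ => by ring
  have hunit : ∀ i, (fun k => V k i) ⬝ᵥ (fun k => V k i) = 1 := by
    intro i
    have h := congrFun (congrFun hV1 i) i
    simpa [Matrix.mul_apply, Matrix.conjTranspose_apply, dotProduct,
      Matrix.one_apply] using h
  refine Finset.sum_le_sum fun i _ => ?_
  have hb : |(star V * Xm * V) i i| ≤ 1 := by
    rw [hdot i]
    calc |(fun k => V k i) ⬝ᵥ (Xm *ᵥ fun k => V k i)| ≤ (fun k => V k i) ⬝ᵥ (fun k => V k i) :=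
          hX _
      _ = 1 := hunit i
  calc (star V * Xm * V) i i * lam i ≤ |(star V * Xm * V) i i * lam i| := le_abs_self _
    _ = |(star V * Xm * V) i i| * |lam i| := abs_mul _ _
    _ ≤ 1 * |lam i| := by
        exact mul_le_mul_of_nonneg_right hb (abs_nonneg _)
    _ = |lam i| := one_mul _

noncomputable def sgn (x : ℝ) : ℝ := if x < 0 then -1 else if x = 0 then 0 else 1

lemma sgn_mul (x : ℝ) : sgn x * x = |x| := by
  unfold sgn
  rcases lt_trichotomy x 0 with h | h | h
  · rw [if_pos h, abs_of_neg h]; ring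
  · simp [h]
  · rw [if_neg (not_lt.mpr h.le), if_neg h.ne', abs_of_pos h, one_mul]

lemma abs_sgn_le (x : ℝ) : |sgn x| ≤ 1 := by
  unfold sgn
  rcases lt_trichotomy x 0 with h | h | h
  · rw [if_pos h]; simp
  · simp [h]
  · rw [if_neg (not_lt.mpr h.le), if_neg h.ne']; simp

lemma dot_mulVec_left (M : Matrix (Fin n) (Fin n) ℝ) (v z : Fin n → ℝ) :
    v ⬝ᵥ (M *ᵥ z) = (Mᵀ *ᵥ v) ⬝ᵥ z := by
  rw [Matrix.dotProduct_mulVec, Matrix.mulVec_transpose]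

lemma nu_triangle (Bm Cm : Matrix (Fin n) (Fin n) ℝ) (hBm : Bm.IsHermitian) (hCm : Cm.IsHermitian)
    (hSum : (Bm + Cm).IsHermitian) :
    ∑ i, |hSum.eigenvalues i| ≤ (∑ i, |hBm.eigenvalues i|) + ∑ i, |hCm.eigenvalues i| := by
  set V := (hSum.eigenvectorUnitary : Matrix (Fin n) (Fin n) ℝ) with hVdef
  have hV1 : star V * V = 1 := Matrix.mem_unitaryGroup_iff'.mp hSum.eigenvectorUnitary.2
  have hV2 : V * star V = 1 := Matrix.mem_unitaryGroup_iff.mp hSum.eigenvectorUnitary.2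
  set lam := hSum.eigenvalues
  set Xm := V * diagonal (fun i => sgn (lam i)) * star V with hXdef
  have hArep : Bm + Cm = V * diagonal lam * star V := by
    conv_lhs => rw [spectral_real hSum, ← hVdef]
  have hXA : Matrix.trace (Xm * (Bm + Cm)) = ∑ i, |lam i| := by
    rw [hXdef, hArep, conj_mul_conj _ _ _ hV1, diagonal_mul_diagonal, trace_conj _ _ hV1,
      Matrix.trace_diagonal]
    exact Finset.sum_congr rfl fun i _ => sgn_mul _
  have hVt : star V = Vᵀ := Matrix.conjTranspose_eq_transpose_of_trivial V
  have hXbound : ∀ v : Fin n → ℝ, |v ⬝ᵥ (Xm *ᵥ v)| ≤ v ⬝ᵥ v := by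
    intro v
    set w : Fin n → ℝ := star V *ᵥ v with hwdef
    have h1 : v ⬝ᵥ (Xm *ᵥ v) = ∑ i, w i * (sgn (lam i) * w i) := by
      rw [hXdef, ← Matrix.mulVec_mulVec, ← Matrix.mulVec_mulVec, dot_mulVec_left,
        ← hVt, ← hwdef]
      simp only [dotProduct, Matrix.mulVec_diagonal]
    have hVtt : (star V)ᵀ = V := by rw [hVt, Matrix.transpose_transpose]
    have e : w ⬝ᵥ w = v ⬝ᵥ v := by
      rw [hwdef, dot_mulVec_left, Matrix.mulVec_mulVec, hVtt, hV2, Matrix.one_mulVec]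
    have h2 : v ⬝ᵥ v = ∑ i, w i * w i := by rw [← e]; rfl
    rw [h1, h2]
    calc |∑ i, w i * (sgn (lam i) * w i)| ≤ ∑ i, |w i * (sgn (lam i) * w i)| :=
          Finset.abs_sum_le_sum_abs _ _
      _ ≤ ∑ i, w i * w i := by
          refine Finset.sum_le_sum fun i _ => ?_
          rw [show w i * (sgn (lam i) * w i) = sgn (lam i) * (w i * w i) by ring, abs_mul,
            abs_mul_self]
          exact mul_le_of_le_one_left (mul_self_nonneg _) (abs_sgn_le _)
  calc ∑ i, |lam i| = Matrix.trace (Xm * (Bm + Cm)) := hXA.symm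
    _ = Matrix.trace (Xm * Bm) + Matrix.trace (Xm * Cm) := by rw [mul_add, Matrix.trace_add]
    _ ≤ (∑ i, |hBm.eigenvalues i|) + ∑ i, |hCm.eigenvalues i| :=
        add_le_add (trace_mul_le _ _ hBm hXbound) (trace_mul_le _ _ hCm hXbound)

lemma nu_rank_two (M : Matrix (Fin n) (Fin n) ℝ) (hM : M.IsHermitian) (hr : M.rank ≤ 2) :
    ∑ i, |hM.eigenvalues i| ≤ Real.sqrt 2 * frobNorm M := by
  classical
  set lam := hM.eigenvalues with hlam
  set V := (hM.eigenvectorUnitary : Matrix (Fin n) (Fin n) ℝ) with hVdef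
  have hV1 : star V * V = 1 := Matrix.mem_unitaryGroup_iff'.mp hM.eigenvectorUnitary.2
  have hsum : ∑ i, lam i ^ 2 = ∑ i, ∑ j, M i j ^ 2 := by
    have t2 : Matrix.trace (M * M) = ∑ i, lam i ^ 2 := by
      conv_lhs => rw [spectral_real hM, ← hVdef]
      rw [conj_mul_conj _ _ _ hV1, diagonal_mul_diagonal, trace_conj _ _ hV1,
        Matrix.trace_diagonal]
      exact Finset.sum_congr rfl fun i _ => (sq (lam i)).symm
    have t1 : Matrix.trace (M * M) = ∑ i, ∑ j, M i j ^ 2 := by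
      rw [Matrix.trace]
      simp only [Matrix.diag_apply, Matrix.mul_apply]
      refine Finset.sum_congr rfl fun i _ => Finset.sum_congr rfl fun j _ => ?_
      have hsymm : M j i = M i j := by simpa using hM.apply i j
      rw [sq, hsymm]
    rw [← t2, t1]
  set s := Finset.univ.filter (fun i => lam i ≠ 0) with hs
  have hcard : (s.card : ℝ) ≤ 2 := by
    have hrk : M.rank = Fintype.card {i // lam i ≠ 0} := hM.rank_eq_card_non_zero_eigs
    rw [Fintype.card_subtype] at hrk
    have h2' : s.card ≤ 2 := by rw [hs]; exact hrk ▸ hr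
    exact_mod_cast h2'
  have hresum : ∑ i, |lam i| = ∑ i ∈ s, |lam i| := by
    symm
    apply Finset.sum_subset (Finset.subset_univ _)
    intro i _ hi
    rw [hs, Finset.mem_filter] at hi
    push_neg at hi
    rw [hi (Finset.mem_univ i), abs_zero]
  have hcs : (∑ i ∈ s, |lam i|) ^ 2 ≤ (s.card : ℝ) * ∑ i ∈ s, |lam i| ^ 2 := by
    exact_mod_cast sq_sum_le_card_mul_sum_sq (s := s) (f := fun i => |lam i|)
  have h2 : ∑ i ∈ s, |lam i| ^ 2 ≤ ∑ i, ∑ j, M i j ^ 2 := by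
    rw [← hsum]
    simp only [sq_abs]
    exact Finset.sum_le_sum_of_subset_of_nonneg (Finset.subset_univ _)
      (fun i _ _ => sq_nonneg _)
  have hfnn : 0 ≤ frobNorm M := Real.sqrt_nonneg _
  have hfrob : frobNorm M ^ 2 = ∑ i, ∑ j, M i j ^ 2 := by
    rw [frobNorm]
    exact Real.sq_sqrt (Finset.sum_nonneg fun i _ => Finset.sum_nonneg fun j _ => sq_nonneg _)
  have hnn : 0 ≤ ∑ i ∈ s, |lam i| := Finset.sum_nonneg fun i _ => abs_nonneg _
  have final : (∑ i ∈ s, |lam i|) ^ 2 ≤ (Real.sqrt 2 * frobNorm M) ^ 2 := by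
    calc (∑ i ∈ s, |lam i|) ^ 2 ≤ (s.card : ℝ) * ∑ i ∈ s, |lam i| ^ 2 := hcs
      _ ≤ 2 * ∑ i, ∑ j, M i j ^ 2 := by
          apply mul_le_mul hcard h2 (Finset.sum_nonneg fun i _ => sq_nonneg _) (by norm_num)
      _ = (Real.sqrt 2 * frobNorm M) ^ 2 := by
          rw [mul_pow, Real.sq_sqrt (by norm_num : (2:ℝ) ≥ 0), hfrob]
  rw [hresum, ← Real.sqrt_sq hnn, ← Real.sqrt_sq (by positivity : 0 ≤ Real.sqrt 2 * frobNorm M)]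
  exact Real.sqrt_le_sqrt final

lemma rank_add_col_row (b c : Fin n → ℝ) :
    (Matrix.of (fun i j => b i + c j) : Matrix (Fin n) (Fin n) ℝ).rank ≤ 2 := by
  set P : Matrix (Fin n) (Fin 2) ℝ := Matrix.of (fun i k => if k = 0 then b i else 1) with hP
  set Q : Matrix (Fin 2) (Fin n) ℝ := Matrix.of (fun k j => if k = 0 then 1 else c j) with hQ
  have hPQ : Matrix.of (fun i j => b i + c j) = P * Q := by
    ext i j
    rw [Matrix.mul_apply, Fin.sum_univ_two]
    simp [hP, hQ]
  rw [hPQ]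
  calc (P * Q).rank ≤ P.rank := Matrix.rank_mul_le_left P Q
    _ ≤ Fintype.card (Fin 2) := Matrix.rank_le_card_width P
    _ = 2 := by simp

lemma mul_centerJ_apply (B : Matrix (Fin n) (Fin n) ℝ) (i j : Fin n) :
    (B * centerJ n) i j = B i j - (n : ℝ)⁻¹ * ∑ k, B i k := by
  rw [centerJ, Matrix.mul_sub, Matrix.mul_one, Matrix.mul_smul, Matrix.sub_apply,
    Matrix.smul_apply, smul_eq_mul]
  congr 1
  rw [Matrix.mul_apply]
  simp

lemma centerJ_mul_apply (B : Matrix (Fin n) (Fin n) ℝ) (i j : Fin n) :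
    (centerJ n * B) i j = B i j - (n : ℝ)⁻¹ * ∑ k, B k j := by
  rw [centerJ, Matrix.sub_mul, Matrix.one_mul, Matrix.smul_mul, Matrix.sub_apply,
    Matrix.smul_apply, smul_eq_mul]
  congr 1
  rw [Matrix.mul_apply]
  simp

lemma sub_center_entry (A : Matrix (Fin n) (Fin n) ℝ) (i j : Fin n) :
    (A - centerJ n * A * centerJ n) i j
      = (n : ℝ)⁻¹ * ∑ k, A i k +
        ((n : ℝ)⁻¹ * ∑ k, A k j - (n : ℝ)⁻¹ * ((n : ℝ)⁻¹ * ∑ k, ∑ l, A l k)) := by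
  rw [Matrix.sub_apply, mul_centerJ_apply, centerJ_mul_apply]
  have hrow : ∑ k, (centerJ n * A) i k = (∑ k, A i k) - (n : ℝ)⁻¹ * ∑ k, ∑ l, A l k := by
    calc ∑ k, (centerJ n * A) i k = ∑ k, (A i k - (n : ℝ)⁻¹ * ∑ l, A l k) :=
          Finset.sum_congr rfl fun k _ => centerJ_mul_apply A i k
      _ = (∑ k, A i k) - (n : ℝ)⁻¹ * ∑ k, ∑ l, A l k := by
          rw [Finset.sum_sub_distrib, Finset.mul_sum]
  rw [hrow]
  ring

lemma rank_sub_center_le (A : Matrix (Fin n) (Fin n) ℝ) :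
    (A - centerJ n * A * centerJ n).rank ≤ 2 := by
  have : A - centerJ n * A * centerJ n
      = Matrix.of (fun i j => ((n : ℝ)⁻¹ * ∑ k, A i k) +
          ((n : ℝ)⁻¹ * ∑ k, A k j - (n : ℝ)⁻¹ * ((n : ℝ)⁻¹ * ∑ k, ∑ l, A l k))) := by
    ext i j
    exact sub_center_entry A i j
  rw [this]
  exact rank_add_col_row _ _

lemma centerJ_hermitian : (centerJ n).IsHermitian := by
  rw [Matrix.IsHermitian, Matrix.conjTranspose_eq_transpose_of_trivial, centerJ,
    Matrix.transpose_sub, Matrix.transpose_smul, Matrix.transpose_one]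
  congr 1

end Aux

/-- For symmetric hollow `A`: `‖A‖_* ≤ √2 ‖A - JAJ‖_F + ‖JAJ‖_*`. -/
theorem nuclearNorm_split (n : ℕ) (hn : 1 ≤ n)
    (A : Matrix (Fin n) (Fin n) ℝ) (hA : A.IsSymm) (hdiag : ∀ i, A i i = 0) :
    nuclearNorm A ≤
      Real.sqrt 2 * frobNorm (A - centerJ n * A * centerJ n) +
        nuclearNorm (centerJ n * A * centerJ n) := by
  have hAh : A.IsHermitian := by
    rw [Matrix.IsHermitian, Matrix.conjTranspose_eq_transpose_of_trivial]; exact hA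
  have hJh : (centerJ n).IsHermitian := centerJ_hermitian
  have hJAJ : (centerJ n * A * centerJ n).IsHermitian := by
    rw [Matrix.IsHermitian, Matrix.conjTranspose_mul, Matrix.conjTranspose_mul, hJh.eq, hAh.eq,
      ← mul_assoc]
  have hM : (A - centerJ n * A * centerJ n).IsHermitian := hAh.sub hJAJ
  have he : (A - centerJ n * A * centerJ n) + centerJ n * A * centerJ n = A := by
    exact sub_add_cancel _ _
  have hAh' : ((A - centerJ n * A * centerJ n) + centerJ n * A * centerJ n).IsHermitian := by
    rw [he]; exact hAh
  calc nuclearNorm A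
      = nuclearNorm ((A - centerJ n * A * centerJ n) + centerJ n * A * centerJ n) := by rw [he]
    _ = ∑ i, |hAh'.eigenvalues i| := sum_abs_eigen _ hAh'
    _ ≤ (∑ i, |hM.eigenvalues i|) + ∑ i, |hJAJ.eigenvalues i| := nu_triangle _ _ hM hJAJ hAh'
    _ ≤ Real.sqrt 2 * frobNorm (A - centerJ n * A * centerJ n)
        + nuclearNorm (centerJ n * A * centerJ n) :=
        add_le_add (nu_rank_two _ hM (rank_sub_center_le A))
          (le_of_eq (sum_abs_eigen _ hJAJ).symm)
end

section
/- The polar cone of the almost positive semidefinite cone K^n_+ = {A ∈ S^n : JAJ ⪰ 0} is (K^n_+)° = { H · [[Z,0],[0,0]] · H : Z ∈ S^{n-1}, Z ⪯ 0 }, where H is the Householder matrix with u = (1,...,1,√n+1)^T. -/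
open Matrix

/-- The vector `u = (1,…,1,√(n+1)+1)ᵀ`. -/
noncomputable def uvec (n : ℕ) : Fin (n + 1) → ℝ :=
  fun i => if i = Fin.last n then Real.sqrt (n + 1) + 1 else 1

/-- The Householder matrix `H = I - (2/(uᵀu)) u uᵀ`. -/
noncomputable def householderH (n : ℕ) : Matrix (Fin (n + 1)) (Fin (n + 1)) ℝ :=
  1 - (2 / (uvec n ⬝ᵥ uvec n)) • Matrix.vecMulVec (uvec n) (uvec n)

namespace PolarAux

variable (n : ℕ)

lemma sq_sqrt' : Real.sqrt (n + 1) * Real.sqrt (n + 1) = (n : ℝ) + 1 :=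
  Real.mul_self_sqrt (by positivity)

lemma sqrt_pos' : 0 < Real.sqrt (n + 1) := Real.sqrt_pos.mpr (by positivity)

lemma dot_uu : uvec n ⬝ᵥ uvec n = 2 * (Real.sqrt (n + 1) * (Real.sqrt (n + 1) + 1)) := by
  have h : Real.sqrt (n+1) * Real.sqrt (n+1) = (n:ℝ)+1 := sq_sqrt' n
  simp only [dotProduct, uvec]
  rw [Fin.sum_univ_castSucc]
  simp only [if_pos rfl]
  have h2 : ∀ i : Fin n, (if (Fin.castSucc i) = Fin.last n then Real.sqrt (n+1) + 1 else 1) *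
      (if (Fin.castSucc i) = Fin.last n then Real.sqrt (n+1) + 1 else 1) = 1 := fun i => by
    rw [if_neg (Fin.castSucc_lt_last i).ne]; ring
  rw [Finset.sum_congr rfl (fun i _ => h2 i)]
  simp
  nlinarith [h]

lemma dot_uu_pos : 0 < uvec n ⬝ᵥ uvec n := by
  rw [dot_uu]; have := sqrt_pos' n; nlinarith

lemma vmvT (a b : Fin (n+1) → ℝ) : (vecMulVec a b)ᵀ = vecMulVec b a := by
  ext i j; simp [vecMulVec_apply, mul_comm]

lemma H_transpose : (householderH n)ᵀ = householderH n := by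
  rw [householderH, transpose_sub, transpose_smul, transpose_one, vmvT]

lemma vmv_mul_vmv :
    vecMulVec (uvec n) (uvec n) * vecMulVec (uvec n) (uvec n)
      = (uvec n ⬝ᵥ uvec n) • vecMulVec (uvec n) (uvec n) := by
  ext i j
  simp only [mul_apply, vecMulVec_apply, Matrix.smul_apply, dotProduct, smul_eq_mul,
    Finset.sum_mul, Finset.mul_sum]
  exact Finset.sum_congr rfl fun k _ => by ring

lemma H_mul_H : householderH n * householderH n = 1 := by
  have hs := (dot_uu_pos n).ne'
  rw [householderH, sub_mul, mul_sub, mul_sub, one_mul, mul_one,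
    smul_mul_smul_comm, vmv_mul_vmv, smul_smul]
  have key : 2 / (uvec n ⬝ᵥ uvec n) * (2 / (uvec n ⬝ᵥ uvec n)) * (uvec n ⬝ᵥ uvec n)
      = 2*(2/(uvec n ⬝ᵥ uvec n)) := by field_simp
  rw [key, one_mul]
  module

lemma H_ones : householderH n *ᵥ (fun _ => (1:ℝ))
    = fun i => if i = Fin.last n then -Real.sqrt (n+1) else 0 := by
  have hs := (dot_uu_pos n).ne'
  have hsum : uvec n ⬝ᵥ (fun _ => (1:ℝ)) = Real.sqrt (n+1) * (Real.sqrt (n+1) + 1) := by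
    have h : Real.sqrt (n+1) * Real.sqrt (n+1) = (n:ℝ)+1 := sq_sqrt' n
    simp only [dotProduct, uvec, mul_one]
    rw [Fin.sum_univ_castSucc]
    simp only [if_pos rfl]
    have h2 : ∀ i : Fin n, (if (Fin.castSucc i) = Fin.last n then Real.sqrt (n+1) + 1 else 1)
        = 1 := fun i => if_neg (Fin.castSucc_lt_last i).ne
    rw [Finset.sum_congr rfl (fun i _ => h2 i)]
    simp
    nlinarith [h]
  have hc : 2 / (uvec n ⬝ᵥ uvec n) * (uvec n ⬝ᵥ (fun _ => (1:ℝ))) = 1 := by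
    rw [hsum, dot_uu]
    have h1 : Real.sqrt (n+1) * (Real.sqrt (n+1) + 1) ≠ 0 := by
      have := sqrt_pos' n; positivity
    field_simp
  funext i
  have : (householderH n *ᵥ (fun _ => (1:ℝ))) i
      = 1 - 2 / (uvec n ⬝ᵥ uvec n) * (uvec n i * (uvec n ⬝ᵥ (fun _ => (1:ℝ)))) := by
    simp only [householderH, sub_mulVec, one_mulVec, smul_mulVec, Pi.sub_apply,
      Pi.smul_apply, smul_eq_mul]
    congr 1
    congr 1
    simp only [mulVec, vecMulVec_apply, dotProduct, Finset.mul_sum]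
    exact Finset.sum_congr rfl fun k _ => by ring
  rw [this, mul_comm (uvec n i), ← mul_assoc, hc, one_mul, uvec]
  by_cases h : i = Fin.last n
  · rw [if_pos h, if_pos h]; ring
  · rw [if_neg h, if_neg h]; ring

lemma dot_H (a b : Fin (n+1) → ℝ) :
    a ⬝ᵥ (householderH n *ᵥ b) = (householderH n *ᵥ a) ⬝ᵥ b := by
  rw [dotProduct_mulVec, ← mulVec_transpose, H_transpose]

lemma HH_vec (x : Fin (n+1) → ℝ) : householderH n *ᵥ (householderH n *ᵥ x) = x := by
  rw [mulVec_mulVec, H_mul_H, one_mulVec]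

lemma dot_ones_eq (x : Fin (n+1) → ℝ) :
    (fun _ => (1:ℝ)) ⬝ᵥ x = -Real.sqrt (n+1) * ((householderH n *ᵥ x) (Fin.last n)) := by
  conv_lhs => rw [← HH_vec n x]
  rw [dot_H, H_ones]
  simp [dotProduct, ite_mul, Finset.sum_ite_eq']

lemma ones_dot_iff (x : Fin (n+1) → ℝ) :
    (fun _ => (1:ℝ)) ⬝ᵥ x = 0 ↔ (householderH n *ᵥ x) (Fin.last n) = 0 := by
  rw [dot_ones_eq, mul_eq_zero]
  have := (sqrt_pos' n).ne'
  constructor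
  · rintro (h | h)
    · exact absurd h (by simpa using this)
    · exact h
  · exact fun h => Or.inr h

lemma quad_conj (N : Matrix (Fin (n+1)) (Fin (n+1)) ℝ) (x : Fin (n+1) → ℝ) :
    x ⬝ᵥ ((householderH n * N * householderH n) *ᵥ x)
      = (householderH n *ᵥ x) ⬝ᵥ (N *ᵥ (householderH n *ᵥ x)) := by
  rw [← mulVec_mulVec, ← mulVec_mulVec, dot_H, dotProduct_mulVec, dotProduct_mulVec]

lemma trace_conj (W Y : Matrix (Fin (n+1)) (Fin (n+1)) ℝ) :
    trace ((householderH n * W * householderH n) * Y)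
      = trace (W * (householderH n * Y * householderH n)) := by
  simp only [mul_assoc]
  rw [trace_mul_comm (householderH n)]
  simp only [mul_assoc]

lemma trace_conj' (A N : Matrix (Fin (n+1)) (Fin (n+1)) ℝ) :
    trace (A * (householderH n * N * householderH n))
      = trace ((householderH n * A * householderH n) * N) := by
  simp only [mul_assoc]
  rw [trace_mul_comm (householderH n)]
  simp only [mul_assoc]

lemma trace_mul_vmv (W : Matrix (Fin (n+1)) (Fin (n+1)) ℝ) (a b : Fin (n+1) → ℝ) :
    trace (W * vecMulVec a b) = b ⬝ᵥ (W *ᵥ a) := by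
  simp only [trace, diag_apply, mul_apply, vecMulVec_apply, dotProduct, mulVec,
    Finset.mul_sum]
  exact Finset.sum_congr rfl fun i _ => Finset.sum_congr rfl fun j _ => by ring

lemma real_ct (A : Matrix (Fin (n+1)) (Fin (n+1)) ℝ) : Aᴴ = Aᵀ := by
  ext i j; simp [conjTranspose_apply]

open scoped MatrixOrder in
lemma psd_eq_ct {A : Matrix (Fin (n+1)) (Fin (n+1)) ℝ} (hA : A.PosSemidef) :
    ∃ B : Matrix (Fin (n+1)) (Fin (n+1)) ℝ, A = Bᴴ * B := by
  have h0 : 0 ≤ A := Matrix.nonneg_iff_posSemidef.mpr hA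
  refine ⟨CFC.sqrt A, ?_⟩
  rw [(Matrix.nonneg_iff_posSemidef.mp (CFC.sqrt_nonneg A)).1.eq]
  exact (CFC.sqrt_mul_sqrt_self A h0).symm

lemma trace_psd_psd {A B : Matrix (Fin (n+1)) (Fin (n+1)) ℝ}
    (hA : A.PosSemidef) (hB : B.PosSemidef) : 0 ≤ trace (A * B) := by
  obtain ⟨C, rfl⟩ := psd_eq_ct n hA
  obtain ⟨D, rfl⟩ := psd_eq_ct n hB
  have : trace (Cᴴ * C * (Dᴴ * D)) = trace ((C * Dᴴ)ᴴ * (C * Dᴴ)) := by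
    simp only [conjTranspose_mul, conjTranspose_conjTranspose, mul_assoc]
    rw [trace_mul_comm D]
    simp only [mul_assoc]
  rw [this]
  set M := C * Dᴴ
  have : trace (Mᴴ * M) = ∑ j, ∑ i, M i j * M i j := by
    simp only [trace, diag_apply, mul_apply, conjTranspose_apply, star_trivial]
  rw [this]
  exact Finset.sum_nonneg fun j _ => Finset.sum_nonneg fun i _ => mul_self_nonneg _

lemma vmv_mulVec (a b z : Fin (n+1) → ℝ) :
    vecMulVec a b *ᵥ z = (b ⬝ᵥ z) • a := by
  funext k
  simp only [mulVec, vecMulVec_apply, dotProduct, Pi.smul_apply, smul_eq_mul,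
    Finset.sum_mul, Finset.mul_sum]
  exact Finset.sum_congr rfl fun j _ => by ring

/-- membership in the cone `C` for conjugated matrices -/
lemma mem_C_of (N : Matrix (Fin (n+1)) (Fin (n+1)) ℝ) (hN : N.IsSymm)
    (h : ∀ z : Fin (n+1) → ℝ, z (Fin.last n) = 0 → 0 ≤ z ⬝ᵥ (N *ᵥ z)) :
    (householderH n * N * householderH n).IsSymm ∧
      ∀ x : Fin (n+1) → ℝ, (fun _ => (1:ℝ)) ⬝ᵥ x = 0 →
        0 ≤ x ⬝ᵥ ((householderH n * N * householderH n) *ᵥ x) := by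
  constructor
  · show (householderH n * N * householderH n)ᵀ = _
    rw [transpose_mul, transpose_mul, H_transpose, hN.eq, ← mul_assoc]
  · intro x hx
    rw [quad_conj]
    exact h _ ((ones_dot_iff n x).mp hx)

lemma B_quad (Y : Matrix (Fin (n+1)) (Fin (n+1)) ℝ)
    (hY : ∀ x : Fin (n+1) → ℝ, (fun _ => (1:ℝ)) ⬝ᵥ x = 0 → 0 ≤ x ⬝ᵥ (Y *ᵥ x)) :
    ∀ z : Fin (n+1) → ℝ, z (Fin.last n) = 0 →
      0 ≤ z ⬝ᵥ ((householderH n * Y * householderH n) *ᵥ z) := by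
  intro z hz
  rw [quad_conj]
  apply hY
  rw [ones_dot_iff, HH_vec]
  exact hz

end PolarAux

open PolarAux

/-- The polar cone of the almost positive semidefinite cone `K^n_+` equals
`{ H · [[Z,0],[0,0]] · H : Z ⪯ 0 }`. -/
theorem polar_almost_psd_cone (n : ℕ) :
    {A : Matrix (Fin (n + 1)) (Fin (n + 1)) ℝ | A.IsSymm ∧
        ∀ Y : Matrix (Fin (n + 1)) (Fin (n + 1)) ℝ,
          (Y.IsSymm ∧ ∀ x : Fin (n + 1) → ℝ,
            (fun _ => (1 : ℝ)) ⬝ᵥ x = 0 → 0 ≤ x ⬝ᵥ Y.mulVec x) →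
          Matrix.trace (A * Y) ≤ 0} =
      {A : Matrix (Fin (n + 1)) (Fin (n + 1)) ℝ |
        ∃ W : Matrix (Fin (n + 1)) (Fin (n + 1)) ℝ,
          (-W).PosSemidef ∧
          (∀ i, W i (Fin.last n) = 0 ∧ W (Fin.last n) i = 0) ∧
          A = householderH n * W * householderH n} := by
  ext A
  simp only [Set.mem_setOf_eq]
  constructor
  · rintro ⟨hAs, hpol⟩
    set W := householderH n * A * householderH n with hWdef
    have hWsymm : Wᵀ = W := by
      rw [hWdef, transpose_mul, transpose_mul, H_transpose, hAs.eq, ← mul_assoc]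
    have hA2 : householderH n * W * householderH n = A := by
      rw [hWdef]
      simp only [← mul_assoc]
      rw [H_mul_H, one_mul, mul_assoc, H_mul_H, mul_one]
    -- trace pairing with conjugated tests
    have key : ∀ N : Matrix (Fin (n+1)) (Fin (n+1)) ℝ, N.IsSymm →
        (∀ z : Fin (n+1) → ℝ, z (Fin.last n) = 0 → 0 ≤ z ⬝ᵥ (N *ᵥ z)) →
        trace (W * N) ≤ 0 := by
      intro N hN h
      have := hpol (householderH n * N * householderH n) (mem_C_of n N hN h)
      rwa [trace_conj' n A N, ← hWdef] at this
    have hquad : ∀ z : Fin (n+1) → ℝ, z ⬝ᵥ (W *ᵥ z) ≤ 0 := by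
      intro z
      have hN : (vecMulVec z z).IsSymm := by show _ᵀ = _; rw [vmvT]
      have h := key (vecMulVec z z) hN (fun w _ => by
        rw [vmv_mulVec, dotProduct_smul, smul_eq_mul, dotProduct_comm w z]
        exact mul_self_nonneg _)
      rwa [trace_mul_vmv] at h
    refine ⟨W, posSemidef_iff_dotProduct_mulVec.mpr ⟨?_, ?_⟩, ?_, hA2.symm⟩
    · show (-W)ᴴ = -W
      rw [real_ct, transpose_neg, hWsymm]
    · intro x
      have hsx : star x = x := funext fun i => star_trivial _
      rw [hsx, neg_mulVec, dotProduct_neg]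
      exact neg_nonneg.mpr (hquad x)
    · intro i
      set a : Fin (n+1) → ℝ := Pi.single i 1 with ha
      set b : Fin (n+1) → ℝ := Pi.single (Fin.last n) 1 with hb
      set N := vecMulVec a b + vecMulVec b a with hNdef
      have hN : N.IsSymm := by
        show Nᵀ = N
        rw [hNdef, transpose_add, vmvT, vmvT]; exact add_comm _ _
      have hcond : ∀ z : Fin (n+1) → ℝ, z (Fin.last n) = 0 → z ⬝ᵥ (N *ᵥ z) = 0 := by
        intro z hz
        rw [hNdef, add_mulVec, dotProduct_add, vmv_mulVec, vmv_mulVec,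
          dotProduct_smul, dotProduct_smul, ha, hb]
        simp [single_dotProduct, hz]
      have h1 : trace (W * N) ≤ 0 :=
        key N hN (fun z hz => le_of_eq (hcond z hz).symm)
      have h2 : trace (W * (-N)) ≤ 0 := by
        refine key (-N) ?_ (fun z hz => ?_)
        · show (-N)ᵀ = -N; rw [transpose_neg, hN.eq]
        · rw [neg_mulVec, dotProduct_neg, hcond z hz, neg_zero]
      rw [mul_neg, trace_neg, neg_nonpos] at h2
      have htr : trace (W * N) = W (Fin.last n) i + W i (Fin.last n) := by
        rw [hNdef, mul_add, trace_add, trace_mul_vmv, trace_mul_vmv, ha, hb]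
        simp [single_dotProduct, mulVec_single]
      have hsym' : W (Fin.last n) i = W i (Fin.last n) := by
        have := congrFun (congrFun hWsymm i) (Fin.last n)
        rw [transpose_apply] at this
        exact this
      constructor <;> linarith [le_antisymm h1 h2, htr, hsym',
        (le_antisymm h1 h2).symm ▸ htr]
  · rintro ⟨W, hW, hzero, rfl⟩
    have hWsymm : Wᵀ = W := by
      have h := hW.1
      rw [Matrix.IsHermitian, real_ct, transpose_neg] at h
      exact neg_injective h
    constructor
    · show (householderH n * W * householderH n)ᵀ = _
      rw [transpose_mul, transpose_mul, H_transpose, hWsymm, ← mul_assoc]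
    · rintro Y ⟨hYs, hYc⟩
      rw [trace_conj n W Y]
      set B := householderH n * Y * householderH n with hBdef
      set d : Fin (n+1) → ℝ := fun j => if j = Fin.last n then 0 else 1 with hd
      have hBs : Bᵀ = B := by
        rw [hBdef, transpose_mul, transpose_mul, H_transpose, hYs.eq, ← mul_assoc]
      have hDWD : diagonal d * W * diagonal d = W := by
        ext i j
        rw [mul_diagonal, diagonal_mul]
        by_cases hi : i = Fin.last n
        · subst hi; rw [(hzero j).2]; ring
        · by_cases hj : j = Fin.last n
          · subst hj; rw [(hzero i).1]; ring
          · simp [hd, hi, hj]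
      have hB'psd : (diagonal d * B * diagonal d).PosSemidef := by
        refine posSemidef_iff_dotProduct_mulVec.mpr ⟨?_, ?_⟩
        · show _ᴴ = _
          rw [real_ct, transpose_mul, transpose_mul, diagonal_transpose, hBs, ← mul_assoc]
        · intro x
          have hsx : star x = x := funext fun i => star_trivial _
          have h1 : (diagonal d * B * diagonal d) *ᵥ x
              = diagonal d *ᵥ (B *ᵥ (diagonal d *ᵥ x)) := by
            rw [mulVec_mulVec, mulVec_mulVec]
          have h2 : x ⬝ᵥ (diagonal d *ᵥ (B *ᵥ (diagonal d *ᵥ x)))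
              = (diagonal d *ᵥ x) ⬝ᵥ (B *ᵥ (diagonal d *ᵥ x)) := by
            rw [dotProduct_mulVec, ← mulVec_transpose, diagonal_transpose]
          rw [hsx, h1, h2]
          apply B_quad n Y hYc
          rw [mulVec_diagonal]
          simp [hd]
      have hEq : trace (W * B) = trace (W * (diagonal d * B * diagonal d)) := by
        conv_lhs => rw [← hDWD]
        simp only [mul_assoc]
        rw [trace_mul_comm (diagonal d)]
        simp only [mul_assoc]
      rw [hEq]
      have hneg : W * (diagonal d * B * diagonal d)
          = -((-W) * (diagonal d * B * diagonal d)) := by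
        simp [neg_mul]
      rw [hneg, trace_neg, neg_nonpos]
      exact trace_psd_psd n hW hB'psd
end

section
/- The almost positive semidefinite cone admits the representation K^n_+ = { H · [[Z, z],[z^T, z_0]] · H : Z ∈ S^{n-1}_+, z ∈ ℝ^{n-1}, z_0 ∈ ℝ }, where H is the Householder matrix with u = (1,...,1,√n+1)^T and S^{n-1}_+ is the cone of positive semidefinite (n-1)×(n-1) matrices. -/
open Matrix

lemma uvec_castSucc (n : ℕ) (i : Fin n) : uvec n i.castSucc = 1 := by
  simp [uvec, (Fin.castSucc_lt_last i).ne]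

lemma uvec_last (n : ℕ) : uvec n (Fin.last n) = Real.sqrt (n + 1) + 1 := by
  simp [uvec]

lemma dot_uu (n : ℕ) :
    uvec n ⬝ᵥ uvec n = 2 * (n + 1) + 2 * Real.sqrt (n + 1) := by
  have hs : Real.sqrt (n + 1) * Real.sqrt (n + 1) = (n : ℝ) + 1 :=
    Real.mul_self_sqrt (by positivity)
  simp only [dotProduct, Fin.sum_univ_castSucc, uvec_castSucc, uvec_last, mul_one,
    Finset.sum_const, Finset.card_univ, Fintype.card_fin, nsmul_eq_mul]
  nlinarith [hs]

lemma dot_one_u (n : ℕ) :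
    (fun _ => (1 : ℝ)) ⬝ᵥ uvec n = (n + 1) + Real.sqrt (n + 1) := by
  simp only [dotProduct, Fin.sum_univ_castSucc, uvec_castSucc, uvec_last, one_mul,
    Finset.sum_const, Finset.card_univ, Fintype.card_fin, nsmul_eq_mul]
  ring

lemma uu_pos (n : ℕ) : 0 < uvec n ⬝ᵥ uvec n := by
  rw [dot_uu]
  have := Real.sqrt_nonneg ((n : ℝ) + 1)
  positivity

lemma vmv_mulVec (m : ℕ) (u v x : Fin m → ℝ) :
    (Matrix.vecMulVec u v).mulVec x = (v ⬝ᵥ x) • u := by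
  ext i
  simp [mulVec, vecMulVec_apply, dotProduct, Finset.sum_mul, Finset.mul_sum]
  exact Finset.sum_congr rfl fun j _ => by ring

lemma H_mulVec (n : ℕ) (x : Fin (n + 1) → ℝ) :
    (householderH n).mulVec x
      = x - ((2 / (uvec n ⬝ᵥ uvec n)) * (uvec n ⬝ᵥ x)) • uvec n := by
  rw [householderH, sub_mulVec, one_mulVec, smul_mulVec, vmv_mulVec, smul_smul]

lemma H_mulVec_one (n : ℕ) :
    (householderH n).mulVec (fun _ => 1) = (fun _ => (1 : ℝ)) - uvec n := by
  rw [H_mulVec]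
  have h1 : uvec n ⬝ᵥ (fun _ => (1:ℝ)) = (fun _ => (1:ℝ)) ⬝ᵥ uvec n := dotProduct_comm _ _
  have hne : uvec n ⬝ᵥ uvec n ≠ 0 := (uu_pos n).ne'
  have : (2 / (uvec n ⬝ᵥ uvec n)) * (uvec n ⬝ᵥ (fun _ => (1:ℝ))) = 1 := by
    rw [h1, dot_one_u, dot_uu] at *
    field_simp
  rw [this, one_smul]

lemma H_symm (n : ℕ) : (householderH n).IsSymm := by
  have h : (Matrix.vecMulVec (uvec n) (uvec n))ᵀ = Matrix.vecMulVec (uvec n) (uvec n) := by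
    ext i j
    simp [vecMulVec_apply, mul_comm]
  unfold Matrix.IsSymm householderH
  rw [transpose_sub, transpose_one, transpose_smul, h]

lemma vmv_mul_vmv (m : ℕ) (u : Fin m → ℝ) :
    Matrix.vecMulVec u u * Matrix.vecMulVec u u = (u ⬝ᵥ u) • Matrix.vecMulVec u u := by
  ext i j
  simp [mul_apply, vecMulVec_apply, dotProduct, Finset.sum_mul, Finset.mul_sum]
  exact Finset.sum_congr rfl fun k _ => by ring

lemma H_sq (n : ℕ) : householderH n * householderH n = 1 := by
  have hne : uvec n ⬝ᵥ uvec n ≠ 0 := (uu_pos n).ne'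
  unfold householderH
  rw [sub_mul, mul_sub, mul_sub]
  simp only [one_mul, mul_one]
  rw [smul_mul_assoc, mul_smul_comm, smul_smul, vmv_mul_vmv, smul_smul]
  have : 2 / (uvec n ⬝ᵥ uvec n) * (2 / (uvec n ⬝ᵥ uvec n)) * (uvec n ⬝ᵥ uvec n)
      = 2 / (uvec n ⬝ᵥ uvec n) + 2 / (uvec n ⬝ᵥ uvec n) := by
    field_simp
    ring
  rw [this, add_smul]
  abel

lemma H_invol (n : ℕ) (x : Fin (n + 1) → ℝ) :
    (householderH n).mulVec ((householderH n).mulVec x) = x := by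
  rw [mulVec_mulVec, H_sq, one_mulVec]

lemma sub_dot_last (n : ℕ) (v : Fin (n + 1) → ℝ) :
    ((fun _ => (1 : ℝ)) - uvec n) ⬝ᵥ v = -Real.sqrt (n + 1) * v (Fin.last n) := by
  simp only [dotProduct, Pi.sub_apply, Fin.sum_univ_castSucc, uvec_castSucc, uvec_last]
  simp

lemma ones_dot (n : ℕ) (x : Fin (n + 1) → ℝ) :
    (fun _ => (1 : ℝ)) ⬝ᵥ x
      = -Real.sqrt (n + 1) * ((householderH n).mulVec x (Fin.last n)) := by
  conv_lhs => rw [← H_invol n x]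
  rw [dotProduct_mulVec, ← mulVec_transpose, (H_symm n).eq, H_mulVec_one, sub_dot_last]

lemma quad_block (n : ℕ) (W : Matrix (Fin (n + 1)) (Fin (n + 1)) ℝ)
    (v : Fin (n + 1) → ℝ) (hv : v (Fin.last n) = 0) :
    v ⬝ᵥ W.mulVec v
      = (v ∘ Fin.castSucc) ⬝ᵥ
        (W.submatrix (Fin.castSucc : Fin n → Fin (n + 1)) Fin.castSucc).mulVec
          (v ∘ Fin.castSucc) := by
  simp [dotProduct, mulVec, submatrix_apply, Fin.sum_univ_castSucc, hv]

lemma quad_conj (n : ℕ) (W : Matrix (Fin (n + 1)) (Fin (n + 1)) ℝ)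
    (x : Fin (n + 1) → ℝ) :
    x ⬝ᵥ (householderH n * W * householderH n).mulVec x
      = ((householderH n).mulVec x) ⬝ᵥ W.mulVec ((householderH n).mulVec x) := by
  rw [← mulVec_mulVec, ← mulVec_mulVec, dotProduct_mulVec, ← mulVec_transpose,
    (H_symm n).eq]

/-- `K^n_+ = { H · [[Z, z],[zᵀ, z₀]] · H : Z ⪰ 0 }`. -/
theorem almost_psd_cone_householder (n : ℕ) :
    {A : Matrix (Fin (n + 1)) (Fin (n + 1)) ℝ | A.IsSymm ∧
        ∀ x : Fin (n + 1) → ℝ,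
          (fun _ => (1 : ℝ)) ⬝ᵥ x = 0 → 0 ≤ x ⬝ᵥ A.mulVec x} =
      {A : Matrix (Fin (n + 1)) (Fin (n + 1)) ℝ |
        ∃ W : Matrix (Fin (n + 1)) (Fin (n + 1)) ℝ,
          W.IsSymm ∧
          (W.submatrix (Fin.castSucc : Fin n → Fin (n + 1))
            (Fin.castSucc : Fin n → Fin (n + 1))).PosSemidef ∧
          A = householderH n * W * householderH n} := by
  have hs : Real.sqrt ((n : ℝ) + 1) ≠ 0 := by positivity
  ext A
  simp only [Set.mem_setOf_eq]
  constructor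
  · rintro ⟨hA, hq⟩
    refine ⟨householderH n * A * householderH n, ?_, posSemidef_iff_dotProduct_mulVec.mpr ⟨?_, ?_⟩, ?_⟩
    · unfold Matrix.IsSymm
      rw [transpose_mul, transpose_mul, (H_symm n).eq, hA.eq, mul_assoc]
    · rw [Matrix.IsHermitian, conjTranspose_eq_transpose_of_trivial, transpose_submatrix]
      rw [transpose_mul, transpose_mul, (H_symm n).eq, hA.eq, mul_assoc]
    · intro y
      rw [star_trivial]
      set v : Fin (n + 1) → ℝ := Fin.snoc y 0 with hvdef
      have hvlast : v (Fin.last n) = 0 := Fin.snoc_last _ _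
      have hvcast : v ∘ Fin.castSucc = y := by
        funext i; simp [hvdef]
      have hb := quad_block n (householderH n * A * householderH n) v hvlast
      rw [hvcast] at hb
      rw [← hb, quad_conj]
      refine hq _ ?_
      rw [ones_dot, H_invol, hvlast, mul_zero]
    · calc A = (householderH n * householderH n) * A * (householderH n * householderH n) := by
            rw [H_sq, one_mul, mul_one]
        _ = householderH n * (householderH n * A * householderH n) * householderH n := by
            noncomm_ring
  · rintro ⟨W, hW, hPSD, rfl⟩
    constructor
    · unfold Matrix.IsSymm
      rw [transpose_mul, transpose_mul, (H_symm n).eq, hW.eq, mul_assoc]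
    · intro x hx
      rw [quad_conj]
      have hlast : (householderH n).mulVec x (Fin.last n) = 0 := by
        rw [ones_dot] at hx
        exact (mul_eq_zero.mp hx).resolve_left (by simpa using hs)
      rw [quad_block n W _ hlast]
      have := hPSD.dotProduct_mulVec_nonneg ((householderH n).mulVec x ∘ Fin.castSucc)
      rwa [star_trivial] at this
end
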